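/- (Approximation guarantee of JAG-PQ-HEUR) Suppose all entries of the n₁×n₂ matrix A are strictly positive, 1 ≤ P < n₁, 1 ≤ Q < n₂, m = P·Q. If the main dimension is partitioned into P intervals optimally with respect to the column-sum projection, and each resulting stripe is partitioned optimally into Q intervals along the other dimension, then the resulting maximum rectangle load is at most (1 + Δ P/n₁)(1 + Δ Q/n₂) · (sum_{i,j} A[i][j])/(P Q), where Δ = (max_{i,j} A[i][j])/(min_{i,j} A[i][j]). -/

import Mathlib

/-- Optimal maximum interval load for partitioning the length-`n` prefix of the
array `f` into `k` contiguous (possibly empty) intervals. -/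
noncomputable def opt1D (f : ℕ → ℝ) (n k : ℕ) : ℝ :=
  sInf {L | ∃ c : ℕ → ℕ, Monotone c ∧ c 0 = 0 ∧ c k = n ∧
    L = ⨆ j : Fin k, ∑ i ∈ Finset.Ico (c j.1) (c (j.1 + 1)), f i}

open Finset

lemma opt1D_bddBelow (f : ℕ → ℝ) (n k : ℕ) (hk : 1 ≤ k)
    (hf : ∀ j < n, 0 ≤ f j) :
    BddBelow {L | ∃ c : ℕ → ℕ, Monotone c ∧ c 0 = 0 ∧ c k = n ∧
    L = ⨆ j : Fin k, ∑ i ∈ Finset.Ico (c j.1) (c (j.1 + 1)), f i} := by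
  refine ⟨0, fun L hL => ?_⟩
  obtain ⟨c, hm, h0, hkk, rfl⟩ := hL
  have hterm : (0:ℝ) ≤ ∑ i ∈ Finset.Ico (c 0) (c 1), f i := by
    refine Finset.sum_nonneg fun i hi => hf i ?_
    have h1 : c 1 ≤ c k := hm hk
    have := (Finset.mem_Ico.mp hi).2
    omega
  have : Nonempty (Fin k) := ⟨⟨0, hk⟩⟩
  refine le_trans hterm ?_
  simpa using le_ciSup (Set.Finite.bddAbove (Set.finite_range
    (fun j : Fin k => ∑ i ∈ Finset.Ico (c j.1) (c (j.1 + 1)), f i))) (⟨0, hk⟩ : Fin k)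

lemma greedy_bound (n k : ℕ) (hn : 1 ≤ n) (hk : 1 ≤ k) (f : ℕ → ℝ)
    (hf : ∀ j < n, 0 < f j) (M : ℝ) (hM : ∀ j < n, f j ≤ M) :
    opt1D f n k ≤ (∑ j ∈ Finset.range n, f j) / k + M := by
  classical
  set T : ℝ := ∑ j ∈ Finset.range n, f j with hTdef
  have hT : 0 < T :=
    Finset.sum_pos (fun j hj => hf j (mem_range.mp hj)) (nonempty_range_iff.mpr (by omega))
  have hM0 : 0 < M := lt_of_lt_of_le (hf 0 hn) (hM 0 hn)
  set F : ℕ → ℝ := fun m => ∑ j ∈ Finset.range (min m n), f j with hFdef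
  have hFn : ∀ m, n ≤ m → F m = T := fun m hm => by
    simp [hFdef, min_eq_right hm, hTdef]
  have hFle : ∀ m, m ≤ n → F m = ∑ j ∈ Finset.range m, f j := fun m hm => by
    simp [hFdef, min_eq_left hm]
  have hex : ∀ j : ℕ, ∃ m, min ((j : ℝ) * T / k) T ≤ F m := fun j =>
    ⟨n, by rw [hFn n le_rfl]; exact min_le_right _ _⟩
  set c : ℕ → ℕ := fun j => Nat.find (hex j) with hcdef
  have hcle : ∀ j, c j ≤ n := fun j =>
    Nat.find_le (by rw [hFn n le_rfl]; exact min_le_right _ _)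
  have hcmono : Monotone c := by
    intro a b hab
    refine Nat.find_mono fun m hm => le_trans (min_le_min ?_ le_rfl) hm
    have : (a:ℝ) ≤ b := by exact_mod_cast hab
    gcongr
  have hc0 : c 0 = 0 := by
    rw [hcdef]
    simp only
    rw [Nat.find_eq_zero]
    have : F 0 = 0 := by simp [hFdef]
    rw [this]
    simp [hT.le]
  have hkR : (0:ℝ) < k := by exact_mod_cast hk
  have hck : c k = n := by
    rw [hcdef]
    simp only
    rw [Nat.find_eq_iff]
    constructor
    · rw [hFn n le_rfl]
      have : (k:ℝ) * T / k = T := by field_simp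
      rw [this, min_self]
    · intro m hm
      rw [not_le]
      have hFm : F m = ∑ j ∈ Finset.range m, f j := hFle m hm.le
      have : ∑ j ∈ Finset.range m, f j < T := by
        refine Finset.sum_lt_sum_of_subset (Finset.range_subset_range.mpr hm.le)
          (Finset.mem_range.mpr hm) (by simp) (hf m hm) ?_
        intro j hj _
        exact (hf j (Finset.mem_range.mp hj)).le
      have hkT : (k:ℝ) * T / k = T := by field_simp
      calc F m < T := by rw [hFm]; exact this
        _ ≤ min ((k:ℝ) * T / k) T := by rw [hkT, min_self]
  -- bound each interval
  have hinterval : ∀ j : Fin k,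
      ∑ i ∈ Finset.Ico (c j.1) (c (j.1 + 1)), f i ≤ T / k + M := by
    intro ⟨j, hj⟩
    simp only
    have hsub : ∑ i ∈ Finset.Ico (c j) (c (j + 1)), f i
        = F (c (j + 1)) - F (c j) := by
      rw [Finset.sum_Ico_eq_sub _ (hcmono (Nat.le_succ j)),
        hFle _ (hcle _), hFle _ (hcle _)]
    have hjk : ((j:ℝ)) * T / k ≤ T := by
      rw [div_le_iff₀ hkR]
      have : (j:ℝ) ≤ k := by exact_mod_cast hj.le
      nlinarith
    have hlow : (j:ℝ) * T / k ≤ F (c j) :=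
      le_trans (le_of_eq (min_eq_left hjk).symm) (Nat.find_spec (hex j))
    have hpos' : 0 ≤ T / k + M := by positivity
    rcases Nat.eq_zero_or_pos (c (j + 1)) with h0 | hpos2
    · rw [hsub, h0]
      have : F 0 = 0 := by simp [hFdef]
      rw [this]
      have h0low : (0:ℝ) ≤ F (c j) := le_trans (by positivity) hlow
      linarith
    · set m := c (j + 1) - 1 with hmdef
      have hmlt : m < c (j + 1) := by omega
      have hmn : m < n := by have := hcle (j + 1); omega
      have hnot := Nat.find_min (hex (j + 1)) hmlt
      rw [not_le] at hnot
      have hup : F m < ((j:ℝ) + 1) * T / k := by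
        refine lt_of_lt_of_le hnot (le_trans (min_le_left _ _) ?_)
        push_cast; exact le_rfl
      have hFsucc : F (c (j + 1)) = F m + f m := by
        have : c (j + 1) = m + 1 := by omega
        rw [this, hFle _ (by omega), hFle _ (by omega), Finset.sum_range_succ]
      rw [hsub, hFsucc]
      have : f m ≤ M := hM m hmn
      have hsplit : ((j:ℝ) + 1) * T / k = (j:ℝ) * T / k + T / k := by ring
      linarith
  -- conclude
  have : Nonempty (Fin k) := ⟨⟨0, hk⟩⟩
  have hmem : (⨆ j : Fin k, ∑ i ∈ Finset.Ico (c j.1) (c (j.1 + 1)), f i)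
      ∈ {L | ∃ c : ℕ → ℕ, Monotone c ∧ c 0 = 0 ∧ c k = n ∧
        L = ⨆ j : Fin k, ∑ i ∈ Finset.Ico (c j.1) (c (j.1 + 1)), f i} :=
    ⟨c, hcmono, hc0, hck, rfl⟩
  calc opt1D f n k ≤ _ :=
        csInf_le (opt1D_bddBelow f n k hk fun j hj => (hf j hj).le) hmem
    _ ≤ T / k + M := ciSup_le hinterval

/-- guarantee of JAG-PQ-HEUR: let `A` be an `n₁ × n₂` strictly
positive matrix, `Δ = (max A)/(min A)`, `1 ≤ P < n₁`, `1 ≤ Q < n₂`. If the rows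
are cut into `P` stripes `r` optimally for the column-sum projection
`C i = ∑_j A i j`, then partitioning each stripe optimally into `Q` column
intervals yields rectangles of load at most
`(1 + Δ P/n₁)(1 + Δ Q/n₂) · (∑ A)/(P·Q)`. -/
theorem stmt_7 (n₁ n₂ P Q : ℕ) (hP : 1 ≤ P) (hP' : P < n₁) (hQ : 1 ≤ Q)
    (hQ' : Q < n₂) (A : ℕ → ℕ → ℝ) (hpos : ∀ i < n₁, ∀ j < n₂, 0 < A i j)
    (Δ : ℝ)
    (hΔ : Δ = ((Finset.range n₁ ×ˢ Finset.range n₂).sup'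
        ((Finset.nonempty_range_iff.mpr (by omega)).product
          (Finset.nonempty_range_iff.mpr (by omega))) (fun p => A p.1 p.2)) /
      ((Finset.range n₁ ×ˢ Finset.range n₂).inf'
        ((Finset.nonempty_range_iff.mpr (by omega)).product
          (Finset.nonempty_range_iff.mpr (by omega))) (fun p => A p.1 p.2)))
    (r : ℕ → ℕ) (hr : Monotone r) (hr0 : r 0 = 0) (hrP : r P = n₁)
    (hropt : (⨆ t : Fin P, ∑ i ∈ Finset.Ico (r t.1) (r (t.1 + 1)),
        ∑ j ∈ Finset.range n₂, A i j) =
      opt1D (fun i => ∑ j ∈ Finset.range n₂, A i j) n₁ P) :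
    ∀ t < P, opt1D (fun j => ∑ i ∈ Finset.Ico (r t) (r (t + 1)), A i j) n₂ Q ≤
      (1 + Δ * P / n₁) * (1 + Δ * Q / n₂) *
        (∑ i ∈ Finset.range n₁, ∑ j ∈ Finset.range n₂, A i j) / (P * Q) := by
  classical
  intro t ht
  have hne : ((Finset.range n₁) ×ˢ (Finset.range n₂)).Nonempty :=
    (Finset.nonempty_range_iff.mpr (by omega)).product
      (Finset.nonempty_range_iff.mpr (by omega))
  set I : ℝ := ((Finset.range n₁ ×ˢ Finset.range n₂).inf' hne (fun p => A p.1 p.2)) with hI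
  set S : ℝ := ((Finset.range n₁ ×ˢ Finset.range n₂).sup' hne (fun p => A p.1 p.2)) with hS
  have hΔ' : Δ = S / I := hΔ
  have hIpos : 0 < I := by
    rw [hI, Finset.lt_inf'_iff]
    rintro ⟨i, j⟩ hij
    rw [Finset.mem_product, Finset.mem_range, Finset.mem_range] at hij
    exact hpos i hij.1 j hij.2
  have hSpos : 0 < S := by
    rw [hS, Finset.lt_sup'_iff]
    exact ⟨(0, 0), Finset.mem_product.mpr (by simp; omega), hpos 0 (by omega) 0 (by omega)⟩
  have hΔpos : 0 < Δ := by rw [hΔ']; positivity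
  -- key pointwise inequality
  have hkey : ∀ i < n₁, ∀ i' < n₁, ∀ j < n₂, ∀ j' < n₂, A i j ≤ Δ * A i' j' := by
    intro i hi i' hi' j hj j' hj'
    have hm1 : (i, j) ∈ Finset.range n₁ ×ˢ Finset.range n₂ :=
      Finset.mem_product.mpr ⟨Finset.mem_range.mpr hi, Finset.mem_range.mpr hj⟩
    have hm2 : (i', j') ∈ Finset.range n₁ ×ˢ Finset.range n₂ :=
      Finset.mem_product.mpr ⟨Finset.mem_range.mpr hi', Finset.mem_range.mpr hj'⟩
    have h1 : A i j ≤ S := Finset.le_sup' (fun p => A p.1 p.2) hm1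
    have h2 : I ≤ A i' j' := Finset.inf'_le (fun p => A p.1 p.2) hm2
    have h3 : Δ * I = S := by rw [hΔ']; field_simp
    calc A i j ≤ S := h1
      _ = Δ * I := h3.symm
      _ ≤ Δ * A i' j' := by nlinarith
  set C : ℕ → ℝ := fun i => ∑ j ∈ Finset.range n₂, A i j with hC
  set Tot : ℝ := ∑ i ∈ Finset.range n₁, C i with hTot
  have hCpos : ∀ i < n₁, 0 < C i := fun i hi =>
    Finset.sum_pos (fun j hj => hpos i hi j (Finset.mem_range.mp hj))
      (Finset.nonempty_range_iff.mpr (by omega))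
  have hTotpos : 0 < Tot :=
    Finset.sum_pos (fun i hi => hCpos i (Finset.mem_range.mp hi))
      (Finset.nonempty_range_iff.mpr (by omega))
  have hn₁pos : (0:ℝ) < n₁ := by exact_mod_cast (by omega : 0 < n₁)
  have hn₂pos : (0:ℝ) < n₂ := by exact_mod_cast (by omega : 0 < n₂)
  have hPpos : (0:ℝ) < P := by exact_mod_cast hP
  have hQpos : (0:ℝ) < Q := by exact_mod_cast hQ
  -- C i ≤ Δ * Tot / n₁
  have hCM : ∀ i < n₁, C i ≤ Δ * Tot / n₁ := by
    intro i hi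
    rw [le_div_iff₀ hn₁pos]
    have h1 : C i * n₁ = ∑ _i' ∈ Finset.range n₁, C i := by
      rw [Finset.sum_const, Finset.card_range, nsmul_eq_mul, mul_comm]
    have h2 : ∀ i' ∈ Finset.range n₁, C i ≤ Δ * C i' := by
      intro i' hi'
      rw [hC, Finset.mul_sum]
      exact Finset.sum_le_sum fun j hj =>
        hkey i hi i' (Finset.mem_range.mp hi') j (Finset.mem_range.mp hj) j
          (Finset.mem_range.mp hj)
    calc C i * n₁ = ∑ i' ∈ Finset.range n₁, C i := h1
      _ ≤ ∑ i' ∈ Finset.range n₁, Δ * C i' := Finset.sum_le_sum h2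
      _ = Δ * Tot := by rw [hTot, Finset.mul_sum]
  have hoptC : opt1D C n₁ P ≤ Tot / P + Δ * Tot / n₁ :=
    greedy_bound n₁ P (by omega) hP C hCpos _ hCM
  -- stripe total
  have hrt1 : r (t + 1) ≤ n₁ := hrP ▸ hr (by omega : t + 1 ≤ P)
  set f : ℕ → ℝ := fun j => ∑ i ∈ Finset.Ico (r t) (r (t + 1)), A i j with hf
  set Tt : ℝ := ∑ i ∈ Finset.Ico (r t) (r (t + 1)), C i with hTt
  have hTtle : Tt ≤ Tot / P + Δ * Tot / n₁ := by
    refine le_trans ?_ (hropt ▸ hoptC)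
    have : Nonempty (Fin P) := ⟨⟨t, ht⟩⟩
    exact le_ciSup (Set.Finite.bddAbove (Set.finite_range
        (fun s : Fin P => ∑ i ∈ Finset.Ico (r s.1) (r (s.1 + 1)),
          ∑ j ∈ Finset.range n₂, A i j))) (⟨t, ht⟩ : Fin P)
  have hsumf : ∑ j ∈ Finset.range n₂, f j = Tt := by
    rw [hTt, hf, hC, Finset.sum_comm]
  have hRHSfact : (0:ℝ) ≤ 1 / Q + Δ / n₂ := by positivity
  have hB0 : (0:ℝ) ≤ Tot / P + Δ * Tot / n₁ := by positivity
  have halg : (Tot / P + Δ * Tot / n₁) * (1 / Q + Δ / n₂) =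
      (1 + Δ * P / n₁) * (1 + Δ * Q / n₂) *
        (∑ i ∈ Finset.range n₁, ∑ j ∈ Finset.range n₂, A i j) / (P * Q) := by
    rw [show (∑ i ∈ Finset.range n₁, ∑ j ∈ Finset.range n₂, A i j) = Tot from rfl]
    field_simp
  rcases eq_or_lt_of_le (hr (Nat.le_succ t)) with heq | hlt
  · -- empty stripe : opt1D ≤ 0 ≤ RHS
    have hf0 : ∀ j, f j = 0 := by
      intro j; rw [hf]; simp [← heq]
    have : Nonempty (Fin Q) := ⟨⟨0, hQ⟩⟩
    have hmem : (0:ℝ) ∈ {L | ∃ c : ℕ → ℕ, Monotone c ∧ c 0 = 0 ∧ c Q = n₂ ∧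
        L = ⨆ j : Fin Q, ∑ i ∈ Finset.Ico (c j.1) (c (j.1 + 1)), f i} := by
      refine ⟨fun j => if j < Q then j else n₂, ?_, by show (if 0 < Q then 0 else n₂) = 0; rw [if_pos (by omega : 0 < Q)], by show (if Q < Q then Q else n₂) = n₂; rw [if_neg (lt_irrefl Q)], ?_⟩
      · intro a b hab; dsimp only; split_ifs <;> omega
      · rw [eq_comm]
        have : ∀ j : Fin Q, ∑ i ∈ Finset.Ico
            ((fun j => if j < Q then j else n₂) j.1)
            ((fun j => if j < Q then j else n₂) (j.1 + 1)), f i = 0 := by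
          intro j
          exact Finset.sum_eq_zero fun i _ => hf0 i
        simp only [this]
        exact ciSup_const
    have hle0 : opt1D f n₂ Q ≤ 0 :=
      csInf_le (opt1D_bddBelow f n₂ Q hQ fun j _ => le_of_eq (hf0 j).symm) hmem
    refine le_trans hle0 ?_
    rw [← halg]
    positivity
  · -- nonempty stripe
    have hfpos : ∀ j < n₂, 0 < f j := by
      intro j hj
      refine Finset.sum_pos (fun i hi => ?_) (by rw [Finset.nonempty_Ico]; exact hlt)
      have hi2 := (Finset.mem_Ico.mp hi).2
      exact hpos i (by omega) j hj
    have hfM : ∀ j < n₂, f j ≤ Δ * Tt / n₂ := by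
      intro j hj
      rw [le_div_iff₀ hn₂pos]
      have h2 : ∀ j' ∈ Finset.range n₂, f j ≤ Δ * f j' := by
        intro j' hj'
        rw [hf, Finset.mul_sum]
        refine Finset.sum_le_sum fun i hi => ?_
        have hi2 := (Finset.mem_Ico.mp hi).2
        exact hkey i (by omega) i (by omega) j hj j' (Finset.mem_range.mp hj')
      calc f j * n₂ = ∑ _j' ∈ Finset.range n₂, f j := by
            rw [Finset.sum_const, Finset.card_range, nsmul_eq_mul, mul_comm]
        _ ≤ ∑ j' ∈ Finset.range n₂, Δ * f j' := Finset.sum_le_sum h2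
        _ = Δ * Tt := by rw [← hsumf, Finset.mul_sum]
    have hgb : opt1D f n₂ Q ≤ (∑ j ∈ Finset.range n₂, f j) / Q + Δ * Tt / n₂ :=
      greedy_bound n₂ Q (by omega) hQ f hfpos _ hfM
    rw [hsumf] at hgb
    have hTt0 : 0 ≤ Tt := Finset.sum_nonneg fun i hi =>
      (hCpos i (by have := (Finset.mem_Ico.mp hi).2; omega)).le
    calc opt1D f n₂ Q ≤ Tt / Q + Δ * Tt / n₂ := hgb
      _ = Tt * (1 / Q + Δ / n₂) := by ring
      _ ≤ (Tot / P + Δ * Tot / n₁) * (1 / Q + Δ / n₂) :=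
          mul_le_mul_of_nonneg_right hTtle hRHSfact
      _ = _ := halg
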